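/- Every shifted leading minor of the binary Pascal matrix P (with entries C(j-1,i-1) mod 2) equals 1; consequently the pair (I, P) is progressive. -/

import Mathlib

open Matrix

/-- The binary Pascal matrix over GF(2): entries C(j-1, i-1) mod 2 (1-indexed),
i.e. C(j, i) with 0-indexed `Fin`. -/
def pascal (m : ℕ) : Matrix (Fin m) (Fin m) (ZMod 2) :=
  fun i j => (Nat.choose j.val i.val : ZMod 2)

/-- The anti-diagonal matrix over GF(2), with ones on the anti-diagonal. -/
def antiDiag (m : ℕ) : Matrix (Fin m) (Fin m) (ZMod 2) :=
  fun i j => if i.val + j.val + 1 = m then 1 else 0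
/-- The hybrid matrix whose first `m - r` rows are the first `m - r` rows of `Cx`
and whose last `r` rows are the first `r` rows of `Cy`. -/
def hybrid (m r : ℕ) (Cx Cy : Matrix (Fin m) (Fin m) (ZMod 2)) :
    Matrix (Fin m) (Fin m) (ZMod 2) :=
  fun i j =>
    if i.val < m - r then Cx i j
    else Cy ⟨i.val - (m - r), Nat.lt_of_le_of_lt (Nat.sub_le _ _) i.isLt⟩ j

/-- A dyadic pair: all hybrid matrices are invertible. -/
def DyadicPair {m : ℕ} (Cx Cy : Matrix (Fin m) (Fin m) (ZMod 2)) : Prop :=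
  ∀ r ≤ m, (hybrid m r Cx Cy).det ≠ 0
/-- A progressive pair: for all `r ≤ k ≤ m`, the hybrid matrix built from the
leading `k × k` blocks of `Cx` and `Cy` is invertible. -/
def ProgressivePair {m : ℕ} (Cx Cy : Matrix (Fin m) (Fin m) (ZMod 2)) : Prop :=
  ∀ k, ∀ hk : k ≤ m, ∀ r ≤ k,
    (hybrid k r (Cx.submatrix (Fin.castLE hk) (Fin.castLE hk))
                (Cy.submatrix (Fin.castLE hk) (Fin.castLE hk))).det ≠ 0
/-- A shifted leading minor: the determinant of the submatrix formed by the
first `r` rows and the `r` consecutive columns `j+1, ..., j+r` (1-indexed). -/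
def shiftedMinor {m : ℕ} (C : Matrix (Fin m) (Fin m) (ZMod 2)) (r j : ℕ)
    (h : j + r ≤ m) : ZMod 2 :=
  (C.submatrix
    (fun i : Fin r => (⟨i.val, lt_of_lt_of_le i.isLt (le_trans (Nat.le_add_left r j) h)⟩ : Fin m))
    (fun i : Fin r => (⟨j + i.val, lt_of_lt_of_le (Nat.add_lt_add_left i.isLt j) h⟩ : Fin m))).det

open Finset in
lemma pascalMinor_det (r j : ℕ) :
    (Matrix.det (fun i c : Fin r => ((j + c.val).choose i.val : ZMod 2))) = 1 := by
  set L : Matrix (Fin r) (Fin r) (ZMod 2) :=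
    fun i k => if k.val ≤ i.val then ((j.choose (i.val - k.val) : ZMod 2)) else 0 with hL
  set U : Matrix (Fin r) (Fin r) (ZMod 2) :=
    fun k c => ((c.val.choose k.val : ZMod 2)) with hU
  have hmul : (fun i c : Fin r => ((j + c.val).choose i.val : ZMod 2)) = L * U := by
    ext i c
    rw [Matrix.mul_apply]
    simp only [Matrix.mul_apply, hL, hU]
    have hvd : ((j + c.val).choose i.val : ZMod 2)
        = ∑ k ∈ range (i.val + 1),
            ((c.val.choose k : ZMod 2)) * (j.choose (i.val - k) : ZMod 2) := by
      have : (j + c.val).choose i.val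
          = ∑ k ∈ range (i.val + 1), c.val.choose k * j.choose (i.val - k) := by
        rw [add_comm j c.val, Nat.add_choose_eq]
        exact Finset.Nat.sum_antidiagonal_eq_sum_range_succ
          (fun a b => c.val.choose a * j.choose b) i.val
      rw [this]
      push_cast
      rfl
    have hsub : ∑ k ∈ range (i.val + 1),
          (if k ≤ i.val then ((j.choose (i.val - k) : ZMod 2)) else 0) * (c.val.choose k : ZMod 2)
        = ∑ k ∈ range r,
          (if k ≤ i.val then ((j.choose (i.val - k) : ZMod 2)) else 0)
            * (c.val.choose k : ZMod 2) := by
      apply Finset.sum_subset (Finset.range_subset_range.2 i.isLt)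
      intro k _ hk
      rw [if_neg (fun h => hk (Finset.mem_range.mpr (Nat.lt_succ_of_le h))), zero_mul]
    rw [hvd, Fin.sum_univ_eq_sum_range
      (fun k => (if k ≤ i.val then ((j.choose (i.val - k) : ZMod 2)) else 0)
        * (c.val.choose k : ZMod 2)), ← hsub]
    apply Finset.sum_congr rfl
    intro k hk
    rw [if_pos (Nat.lt_succ_iff.mp (Finset.mem_range.mp hk)), mul_comm]
  rw [hmul, Matrix.det_mul]
  have hdL : L.det = 1 := by
    rw [Matrix.det_of_lowerTriangular L (by
      intro a b h
      simp only [hL]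
      exact if_neg (Nat.not_le.2 h))]
    simp [hL]
  have hdU : U.det = 1 := by
    rw [Matrix.det_of_upperTriangular (by
      intro a b h
      have hb : (b : ℕ) < (a : ℕ) := h
      simp only [hU]
      rw [Nat.choose_eq_zero_of_lt hb, Nat.cast_zero])]
    simp [hU]
  rw [hdL, hdU, one_mul]

/-- Every shifted leading minor of the binary Pascal matrix equals 1;
consequently `(I, P)` is a progressive pair. -/
theorem pascal_shiftedMinors_and_progressive (m : ℕ) :
    (∀ r j, ∀ h : j + r ≤ m, shiftedMinor (pascal m) r j h = 1) ∧
    ProgressivePair 1 (pascal m) := by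
  constructor
  · intro r j h
    have := pascalMinor_det r j
    rw [← this]
    rfl
  · intro k hk r hr
    have hkr : (k - r) + r = k := Nat.sub_add_cancel hr
    set e : Fin (k - r) ⊕ Fin r ≃ Fin k := finSumFinEquiv.trans (finCongr hkr) with he
    set H := hybrid k r ((1 : Matrix (Fin m) (Fin m) (ZMod 2)).submatrix (Fin.castLE hk) (Fin.castLE hk))
                ((pascal m).submatrix (Fin.castLE hk) (Fin.castLE hk)) with hH
    have hdet : H.det = (H.submatrix e e).det := (Matrix.det_submatrix_equiv_self e H).symm
    have hblock : H.submatrix e e =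
        Matrix.fromBlocks 1 0
          (fun (i : Fin r) (c : Fin (k - r)) => ((c.val).choose i.val : ZMod 2))
          (fun (i : Fin r) (c : Fin r) => (((k - r) + c.val).choose i.val : ZMod 2)) := by
      ext i c
      cases i with
      | inl i =>
        cases c with
        | inl c =>
          have h1 : (e (Sum.inl i)).val = i.val := rfl
          have h2 : (e (Sum.inl c)).val = c.val := rfl
          simp only [Matrix.submatrix_apply, hH, hybrid, Matrix.fromBlocks_apply₁₁]
          rw [if_pos (h1 ▸ i.isLt)]
          simp only [Matrix.submatrix_apply, Matrix.one_apply, Fin.castLE]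
          simp [Fin.ext_iff, h1, h2, Matrix.one_apply]
          show _ = (1 : Matrix (Fin (k - r)) (Fin (k - r)) (ZMod 2)) i c
          simp [Matrix.one_apply, Fin.ext_iff]
        | inr c =>
          have h1 : (e (Sum.inl i)).val = i.val := rfl
          have h2 : (e (Sum.inr c)).val = (k - r) + c.val := rfl
          simp only [Matrix.submatrix_apply, hH, hybrid, Matrix.fromBlocks_apply₁₂]
          rw [if_pos (h1 ▸ i.isLt)]
          simp only [Matrix.submatrix_apply, Matrix.one_apply, Fin.castLE]
          rw [if_neg]
          · rfl
          · simp only [Fin.ext_iff, h1, h2]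
            omega
      | inr i =>
        have h1 : (e (Sum.inr i)).val = (k - r) + i.val := rfl
        have hnot : ¬ (e (Sum.inr i)).val < k - r := by rw [h1]; omega
        cases c with
        | inl c =>
          simp only [Matrix.submatrix_apply, hH, hybrid, Matrix.fromBlocks_apply₂₁]
          rw [if_neg hnot]
          have h2 : (e (Sum.inl c)).val = c.val := rfl
          simp only [Matrix.submatrix_apply, pascal, Fin.castLE]
          rw [h1, h2, Nat.add_sub_cancel_left]
          rfl
        | inr c =>
          simp only [Matrix.submatrix_apply, hH, hybrid, Matrix.fromBlocks_apply₂₂]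
          rw [if_neg hnot]
          have h2 : (e (Sum.inr c)).val = (k - r) + c.val := rfl
          simp only [Matrix.submatrix_apply, pascal, Fin.castLE]
          rw [h1, h2, Nat.add_sub_cancel_left]
          rfl
    rw [hdet, hblock]
    erw [Matrix.det_fromBlocks_zero₁₂]
    rw [Matrix.det_one, one_mul,
      pascalMinor_det r (k - r)]
    exact one_ne_zero
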